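/- Let D be a symmetric n×n matrix with eigenvalues λ_max ≥ 0 and λ_min < 0, and corresponding unit eigenvectors z_max, z_min. If e^{λ_max} < cosh(λ_min), then δ_{z_max} is not a maximizer of the energy E(μ) = ∬ exp(⟪x, D y⟫) dμ(x) dμ(y): indeed E(δ_{z_max}) = e^{λ_max} < cosh(λ_min) = E((1/2)(δ_{z_min} + δ_{−z_min})). -/

import Mathlib

open MeasureTheory RealInnerProductSpace ENNReal

noncomputable def energy {n : ℕ} (D : Matrix (Fin n) (Fin n) ℝ)
    (μ : Measure (EuclideanSpace ℝ (Fin n))) : ℝ :=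
  ∫ x, ∫ y, Real.exp ⟪x, Matrix.toEuclideanLin D y⟫ ∂μ ∂μ

lemma integrable_dirac' {α : Type*} [MeasurableSpace α] [MeasurableSingletonClass α]
    (f : α → ℝ) (a : α) : Integrable f (Measure.dirac a) := by
  refine (integrable_const (f a)).congr ?_
  rw [ae_dirac_eq]
  exact Filter.eventually_pure.mpr rfl

theorem stmt14 {n : ℕ} (D : Matrix (Fin n) (Fin n) ℝ) (hD : D.IsSymm)
    (lamMax lamMin : ℝ) (hmax0 : 0 ≤ lamMax) (hmin0 : lamMin < 0)
    (zMax zMin : EuclideanSpace ℝ (Fin n)) (hzMax : ‖zMax‖ = 1) (hzMin : ‖zMin‖ = 1)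
    (heigMax : Matrix.toEuclideanLin D zMax = lamMax • zMax)
    (heigMin : Matrix.toEuclideanLin D zMin = lamMin • zMin)
    (hlt : Real.exp lamMax < Real.cosh lamMin) :
    energy D (Measure.dirac zMax) = Real.exp lamMax ∧
    energy D ((2 : ℝ≥0∞)⁻¹ • (Measure.dirac zMin + Measure.dirac (-zMin))) =
      Real.cosh lamMin ∧
    energy D (Measure.dirac zMax) <
      energy D ((2 : ℝ≥0∞)⁻¹ • (Measure.dirac zMin + Measure.dirac (-zMin))) := by
  have hMM : ⟪zMax, Matrix.toEuclideanLin D zMax⟫ = lamMax := by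
    rw [heigMax, real_inner_smul_right, real_inner_self_eq_norm_sq, hzMax]; ring
  have hmm : ⟪zMin, Matrix.toEuclideanLin D zMin⟫ = lamMin := by
    rw [heigMin, real_inner_smul_right, real_inner_self_eq_norm_sq, hzMin]; ring
  have h1 : energy D (Measure.dirac zMax) = Real.exp lamMax := by
    simp only [energy, integral_dirac, hMM]
  refine ⟨h1, ?_, ?_⟩
  · have h2 : energy D ((2 : ℝ≥0∞)⁻¹ • (Measure.dirac zMin + Measure.dirac (-zMin))) =
        Real.cosh lamMin := by
      simp only [energy, integral_smul_measure,
        integral_add_measure (_root_.integrable_dirac' _ _) (_root_.integrable_dirac' _ _),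
        integral_dirac, map_neg, inner_neg_neg, inner_neg_left, inner_neg_right, hmm,
        Real.cosh_eq]
      have h2r : ((2:ℝ≥0∞)⁻¹).toReal = (2:ℝ)⁻¹ := by simp
      rw [h2r]; simp only [smul_eq_mul]; ring
    exact h2
  · have h2 : energy D ((2 : ℝ≥0∞)⁻¹ • (Measure.dirac zMin + Measure.dirac (-zMin))) =
        Real.cosh lamMin := by
      simp only [energy, integral_smul_measure,
        integral_add_measure (_root_.integrable_dirac' _ _) (_root_.integrable_dirac' _ _),
        integral_dirac, map_neg, inner_neg_neg, inner_neg_left, inner_neg_right, hmm,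
        Real.cosh_eq]
      have h2r : ((2:ℝ≥0∞)⁻¹).toReal = (2:ℝ)⁻¹ := by simp
      rw [h2r]; simp only [smul_eq_mul]; ring
    rw [h1, h2]; exact hlt
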